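/- Let w⁺, w⁻, n⁺, n⁻ ∈ ℝ³ satisfy w⁺·n⁺ + w⁻·n⁻ = 0, let u⁺, u⁻ ∈ ℝ, and let α ≥ 0. Define the edge dissipation B_e := -(1/2){w,n}[[u²]] + ({uw,n} + (α/2)[[u]])[[u]]. Then B_e = (α/2)[[u]]² ≥ 0. -/
import Mathlib

/-- Edge dissipation in the L²-stability proof: B_e = (α/2)[[u]]² ≥ 0. -/
theorem stmt_3 (wp wm np nm : Fin 3 → ℝ)
    (h : (∑ i, wp i * np i) + (∑ i, wm i * nm i) = 0)
    (up um α : ℝ) (hα : 0 ≤ α) :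
    -(1 / 2) * (((∑ i, wp i * np i) - (∑ i, wm i * nm i)) / 2) * (up ^ 2 - um ^ 2)
        + ((((∑ i, (up * wp i) * np i) - (∑ i, (um * wm i) * nm i)) / 2)
            + (α / 2) * (up - um)) * (up - um)
      = (α / 2) * (up - um) ^ 2 ∧
    0 ≤ (α / 2) * (up - um) ^ 2 := by
  have h1 : (∑ i, (up * wp i) * np i) = up * ∑ i, wp i * np i := by
    rw [Finset.mul_sum]; exact Finset.sum_congr rfl fun i _ => by ring
  have h2 : (∑ i, (um * wm i) * nm i) = um * ∑ i, wm i * nm i := by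
    rw [Finset.mul_sum]; exact Finset.sum_congr rfl fun i _ => by ring
  constructor
  · rw [h1, h2]
    have hb : (∑ i, wm i * nm i) = -(∑ i, wp i * np i) := by linarith
    rw [hb]; ring
  · positivity
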